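/- Let W ≤ F_{q^n} be an F_q-linear subspace with dim W ≥ n/2 + 1. Then the norm map N : F_{q^n} → F_q, N(x) = x^{(q^n−1)/(q−1)}, is surjective when restricted to W. -/

import Mathlib

open Finset

section Aux

variable (F E : Type*) [Field F] [Fintype F] [Field E] [Fintype E] [Algebra F E]

/-- The norm of a finite field extension is `x ^ (1 + q + ⋯ + q^(n-1))`. -/
private lemma aux_norm_formula (x : E) :
    algebraMap F E (Algebra.norm F x) =
      x ^ (∑ j ∈ range (Module.finrank F E), Fintype.card F ^ j) := by
  classical
  set q := Fintype.card F with hqdef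
  set n := Module.finrank F E with hndef
  have hq2 : 1 < q := Fintype.one_lt_card
  have hcardE : Fintype.card E = q ^ n := Module.card_eq_pow_finrank
  have hn0 : 0 < n := Module.finrank_pos
  -- characteristic
  set p := ringChar F with hpdef
  obtain ⟨s, hp, hqs⟩ := FiniteField.card F p
  haveI : Fact p.Prime := ⟨hp⟩
  haveI : CharP E p := charP_of_injective_algebraMap (algebraMap F E).injective p
  -- Frobenius
  let φ₀ : E →ₐ[F] E :=
    { toFun := fun y => y ^ q
      map_one' := one_pow q
      map_mul' := fun a b => mul_pow a b q
      map_zero' := zero_pow (by omega)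
      map_add' := fun a b => by
        simp only [hqdef, hqs]
        exact add_pow_char_pow a b p ↑s
      commutes' := fun a => by
        show (algebraMap F E a) ^ q = algebraMap F E a
        rw [← map_pow, FiniteField.pow_card] }
  let φ : E ≃ₐ[F] E := AlgEquiv.ofBijective φ₀
    ((Finite.injective_iff_bijective).mp φ₀.toRingHom.injective)
  have hφpow : ∀ (j : ℕ) (y : E), (φ ^ j) y = y ^ q ^ j := by
    intro j
    induction j with
    | zero => intro y; simp
    | succ j ih =>
      intro y
      have : (φ ^ (j + 1)) y = (φ ^ j) (φ y) := by
        rw [pow_succ]; rfl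
      rw [this]
      have hφy : φ y = y ^ q := rfl
      rw [hφy, ih, ← pow_mul, pow_succ, mul_comm (q ^ j) q]
  have hne : ∀ j, 0 < j → j < n → φ ^ j ≠ 1 := by
    intro j hj0 hjn h1
    obtain ⟨g, hg⟩ := IsCyclic.exists_generator (α := Eˣ)
    have hog : orderOf g = q ^ n - 1 := by
      rw [orderOf_eq_card_of_forall_mem_zpowers hg, Nat.card_eq_fintype_card,
        Fintype.card_units, hcardE]
    have hgeq : (g : E) ^ q ^ j = (g : E) := by
      have := congrArg (fun f : E ≃ₐ[F] E => f (g : E)) h1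
      simpa [hφpow j] using this
    have hgu : g ^ q ^ j = g := Units.ext (by simpa using hgeq)
    have hdvd : orderOf g ∣ q ^ j - 1 := by
      apply orderOf_dvd_of_pow_eq_one
      have h1le : 1 ≤ q ^ j := Nat.one_le_pow _ _ (by omega)
      have : g ^ (q ^ j - 1) * g = g := by
        rw [← pow_succ, Nat.sub_add_cancel h1le, hgu]
      calc g ^ (q ^ j - 1) = g ^ (q ^ j - 1) * g * g⁻¹ := by group
        _ = g * g⁻¹ := by rw [this]
        _ = 1 := mul_inv_cancel g
    have hlt : q ^ j < q ^ n := Nat.pow_lt_pow_right hq2 hjn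
    have hpos : 0 < q ^ j - 1 := by
      have : 2 ≤ q ^ j := le_trans hq2 (Nat.le_self_pow (by omega) q)
      omega
    have := Nat.le_of_dvd hpos (hog ▸ hdvd)
    omega
  have hφn : φ ^ n = 1 := by
    ext y
    have : (φ ^ n) y = y ^ q ^ n := hφpow n y
    rw [this, ← hcardE, FiniteField.pow_card]
    rfl
  have horder : orderOf φ = n := by
    have hdvd : orderOf φ ∣ n := orderOf_dvd_of_pow_eq_one hφn
    have hpos : 0 < orderOf φ := by
      exact orderOf_pos φ
    rcases lt_or_eq_of_le (Nat.le_of_dvd hn0 hdvd) with h | h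
    · exact absurd (pow_orderOf_eq_one φ) (hne _ hpos h)
    · exact h
  -- every automorphism is a power of φ
  have htop : Subgroup.zpowers φ = ⊤ := by
    apply Subgroup.eq_top_of_card_eq
    rw [Nat.card_zpowers, horder, IsGalois.card_aut_eq_finrank]
  have hmem : ∀ σ : E ≃ₐ[F] E, σ ∈ Submonoid.powers φ := fun σ =>
    mem_powers_iff_mem_zpowers.mpr (htop ▸ Subgroup.mem_top σ)
  rw [Algebra.norm_eq_prod_automorphisms]
  rw [← Finset.prod_pow_eq_pow_sum]
  refine (Finset.prod_bij (fun (j : ℕ) (_ : j ∈ range n) => φ ^ j) ?_ ?_ ?_ ?_).symm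
  · intro j _; exact mem_univ _
  · intro j₁ hj₁ j₂ hj₂ h
    have := pow_injOn_Iio_orderOf (x := φ)
    exact this (by simpa [horder] using mem_range.mp hj₁)
      (by simpa [horder] using mem_range.mp hj₂) h
  · intro σ _
    obtain ⟨m, hm⟩ := hmem σ
    refine ⟨m % n, mem_range.mpr (Nat.mod_lt _ hn0), ?_⟩
    calc φ ^ (m % n) = φ ^ (m % orderOf φ) := by rw [horder]
      _ = φ ^ m := pow_mod_orderOf ..
      _ = σ := hm
  · intro j _
    exact (hφpow j x).symm

/-- The norm map is surjective for finite fields. -/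
private lemma aux_norm_surjective (a : F) : ∃ y : E, Algebra.norm F y = a := by
  classical
  rcases eq_or_ne a 0 with rfl | ha
  · exact ⟨0, Algebra.norm_zero⟩
  set q := Fintype.card F with hqdef
  set n := Module.finrank F E with hndef
  have hq2 : 1 < q := Fintype.one_lt_card
  have hcardE : Fintype.card E = q ^ n := Module.card_eq_pow_finrank
  have hn0 : 0 < n := Module.finrank_pos
  set m := ∑ j ∈ range n, q ^ j with hmdef
  have hm0 : 0 < m := by
    rw [hmdef]
    have : 0 < q ^ 0 := by norm_num
    exact Finset.sum_pos (fun i _ => pow_pos (by omega) i) ⟨0, mem_range.mpr hn0⟩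
  have hqn1 : 1 ≤ q ^ n := Nat.one_le_pow _ _ (by omega)
  have hgeom : m * (q - 1) = q ^ n - 1 := by
    have hZ : (m : ℤ) * ((q : ℤ) - 1) = (q : ℤ) ^ n - 1 := by
      rw [hmdef]
      push_cast
      exact geom_sum_mul (q : ℤ) n
    have : ((m * (q - 1) : ℕ) : ℤ) = ((q ^ n - 1 : ℕ) : ℤ) := by
      push_cast [Nat.cast_sub (by omega : 1 ≤ q), Nat.cast_sub hqn1]
      push_cast at hZ ⊢
      linarith
    exact_mod_cast this
  obtain ⟨g, hg⟩ := IsCyclic.exists_generator (α := Eˣ)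
  have hog : orderOf g = q ^ n - 1 := by
    rw [orderOf_eq_card_of_forall_mem_zpowers hg, Nat.card_eq_fintype_card,
      Fintype.card_units, hcardE]
  set b := Algebra.norm F (g : E) with hbdef
  have hb0 : b ≠ 0 := Algebra.norm_ne_zero_iff.mpr (Units.ne_zero g)
  have hbmap : algebraMap F E b = (g : E) ^ m := aux_norm_formula F E (g : E)
  set bu : Fˣ := Units.mk0 b hb0 with hbudef
  have hjinj : Function.Injective (Units.map (algebraMap F E : F →* E)) :=
    Units.map_injective (algebraMap F E).injective
  have hju : Units.map (algebraMap F E : F →* E) bu = g ^ m := by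
    apply Units.ext
    simpa [hbudef] using hbmap
  have hobu : orderOf bu = q - 1 := by
    rw [← orderOf_injective (Units.map (algebraMap F E : F →* E)) hjinj bu, hju,
      orderOf_pow' g hm0.ne', hog, Nat.gcd_eq_right ⟨q - 1, hgeom.symm⟩, ← hgeom,
      Nat.mul_div_cancel_left _ hm0]
  have htop : Subgroup.zpowers bu = ⊤ := by
    apply Subgroup.eq_top_of_card_eq
    rw [Nat.card_zpowers, hobu, Nat.card_eq_fintype_card, Fintype.card_units]
  obtain ⟨t, ht⟩ := mem_powers_iff_mem_zpowers.mpr (htop ▸ Subgroup.mem_top (Units.mk0 a ha))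
  refine ⟨(g : E) ^ t, ?_⟩
  have : Algebra.norm F ((g : E) ^ t) = b ^ t := by
    rw [hbdef, ← map_pow]
  rw [this]
  have := congrArg (Units.val) ht
  simpa [hbudef] using this

end Aux
private lemma aux_mulChar_orthogonality (F : Type*) [Field F] [Fintype F] [DecidableEq F]
    [Fintype (MulChar F ℂ)] (b : F) :
    ∑ χ : MulChar F ℂ, χ b = if b = 1 then ((Fintype.card F - 1 : ℕ) : ℂ) else 0 := by
  classical
  haveI : NeZero (Monoid.exponent Fˣ) := ⟨Monoid.exponent_ne_zero_of_finite⟩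
  rcases eq_or_ne b 1 with rfl | hb
  · rw [if_pos rfl]
    have h1 : ∀ χ : MulChar F ℂ, χ (1 : F) = 1 := fun χ => map_one χ
    rw [Finset.sum_congr rfl (fun χ _ => h1 χ), Finset.sum_const, nsmul_eq_mul, mul_one]
    have hc : Fintype.card (MulChar F ℂ) = Fintype.card F - 1 := by
      have h2 := MulChar.card_eq_card_units_of_hasEnoughRootsOfUnity F ℂ
      simpa [Nat.card_eq_fintype_card, Fintype.card_units] using h2
    rw [Finset.card_univ, hc]
  · rw [if_neg hb]
    by_cases hu : IsUnit b
    · obtain ⟨χ₀, hχ₀⟩ := MulChar.exists_apply_ne_one_of_hasEnoughRootsOfUnity F ℂ hb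
      have key : χ₀ b * ∑ χ : MulChar F ℂ, χ b = ∑ χ : MulChar F ℂ, χ b := by
        rw [Finset.mul_sum]
        refine Fintype.sum_equiv (Equiv.mulLeft χ₀) _ _ fun χ => ?_
        simp only [Equiv.coe_mulLeft, MulChar.mul_apply]
      exact eq_zero_of_mul_eq_self_left hχ₀ key
    · exact Finset.sum_eq_zero fun χ _ => MulChar.map_nonunit χ hu

private lemma aux_gauss_abs {E : Type*} [Field E] [Fintype E] (lam : MulChar E ℂ)
    (hlam : lam ≠ 1) (ψ : AddChar E ℂ) (hψ : ψ.IsPrimitive) :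
    ‖gaussSum lam ψ‖ = Real.sqrt (Fintype.card E) := by
  classical
  have hchar : 0 < ringChar E := (CharP.char_is_prime E (ringChar E)).pos
  have hconj : (starRingEnd ℂ) (gaussSum lam ψ) = gaussSum lam⁻¹ ψ⁻¹ := by
    rw [gaussSum, gaussSum, map_sum]
    refine Finset.sum_congr rfl fun x _ => ?_
    rw [map_mul, AddChar.starComp_apply hchar, starRingEnd_apply, MulChar.star_apply']
  have hmul := gaussSum_mul_gaussSum_eq_card hlam hψ
  rw [← hconj, Complex.mul_conj] at hmul
  have hnormSq : Complex.normSq (gaussSum lam ψ) = (Fintype.card E : ℝ) := by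
    exact_mod_cast hmul
  rw [Complex.norm_def, hnormSq]

private lemma aux_abs_mulChar_unit {F : Type*} [Field F] [Fintype F] (χ : MulChar F ℂ)
    {b : F} (hb : b ≠ 0) : ‖χ b‖ = 1 := by
  classical
  have hpow : (χ b) ^ (Fintype.card Fˣ) = 1 := by
    rw [← map_pow]
    have hb1 : b ^ (Fintype.card Fˣ) = 1 := by
      rw [Fintype.card_units]
      exact FiniteField.pow_card_sub_one_eq_one b hb
    rw [hb1, map_one]
  exact Complex.norm_eq_one_of_pow_eq_one hpow Fintype.card_ne_zero
/-- The multiplicative character of `E` obtained by composing a character of `F`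
with the norm map. -/
private noncomputable def normMulChar (F : Type*) (E : Type*) [Field F] [Fintype F]
    [Field E] [Fintype E] [Algebra F E] (χ : MulChar F ℂ) : MulChar E ℂ where
  toFun := fun x => χ (Algebra.norm F x)
  map_one' := by
    show χ (Algebra.norm F (1 : E)) = 1
    rw [map_one, map_one]
  map_mul' := fun x y => by
    show χ (Algebra.norm F (x * y)) = χ (Algebra.norm F x) * χ (Algebra.norm F y)
    rw [map_mul, map_mul]
  map_nonunit' := fun x hx => by
    have hx0 : x = 0 := by
      by_contra h
      exact hx (isUnit_iff_ne_zero.mpr h)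
    show χ (Algebra.norm F x) = 0
    rw [hx0, Algebra.norm_zero]
    exact χ.map_nonunit not_isUnit_zero

private lemma normMulChar_apply (F : Type*) (E : Type*) [Field F] [Fintype F]
    [Field E] [Fintype E] [Algebra F E] (χ : MulChar F ℂ) (x : E) :
    normMulChar F E χ x = χ (Algebra.norm F x) := rfl

private lemma normMulChar_ne_one (F : Type*) (E : Type*) [Field F] [Fintype F]
    [Field E] [Fintype E] [Algebra F E] {χ : MulChar F ℂ} (hχ : χ ≠ 1) :
    normMulChar F E χ ≠ 1 := by
  obtain ⟨u, hu⟩ := MulChar.ne_one_iff.mp hχ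
  obtain ⟨y, hy⟩ := aux_norm_surjective F E (u : F)
  have hy0 : y ≠ 0 := by
    intro h
    rw [h, Algebra.norm_zero] at hy
    exact Units.ne_zero u hy.symm
  rw [MulChar.ne_one_iff]
  refine ⟨(isUnit_iff_ne_zero.mpr hy0).unit, ?_⟩
  rw [IsUnit.unit_spec, normMulChar_apply, hy]
  exact hu

/-- Character sum over a subspace is bounded by `√#E`. -/
private lemma aux_char_sum_bound (F E : Type*) [Field F] [Fintype F] [Field E] [Fintype E]
    [Algebra F E] (W : Submodule F E) (lam : MulChar E ℂ) (hlam : lam ≠ 1)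
    (s : Finset E) (hs : ∀ x, x ∈ s ↔ x ∈ W) :
    ‖∑ x ∈ s, lam x‖ ≤ Real.sqrt (Fintype.card E) := by
  classical
  set ψF := AddChar.FiniteField.primitiveChar_to_Complex F with hψFdef
  have hψFprim := AddChar.FiniteField.primitiveChar_to_Complex_isPrimitive F
  have hψFne : ψF ≠ 1 := by
    intro h
    have h2 := hψFprim (one_ne_zero (α := F))
    rw [← hψFdef, h, AddChar.mulShift_one] at h2
    exact h2 rfl
  obtain ⟨b₀, hb₀⟩ := AddChar.ne_one_iff.mp hψFne
  -- surjectivity of x ↦ Tr (t * x) for t ≠ 0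
  have hTr : ∀ t : E, t ≠ 0 → ∀ c : F, ∃ x : E, Algebra.trace F E (t * x) = c := by
    intro t ht c
    have h1 : ¬ ∀ y, Algebra.traceForm F E t y = 0 := fun h =>
      ht ((traceForm_nondegenerate F E).1 t h)
    push_neg at h1
    obtain ⟨x₀, hx₀⟩ := h1
    rw [Algebra.traceForm_apply] at hx₀
    refine ⟨(c / Algebra.trace F E (t * x₀)) • x₀, ?_⟩
    rw [mul_smul_comm, map_smul, smul_eq_mul, div_mul_cancel₀ _ hx₀]
  set ψ : AddChar E ℂ := ψF.compAddMonoidHom (Algebra.trace F E).toAddMonoidHom with hψdef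
  have hψapp : ∀ x : E, ψ x = ψF (Algebra.trace F E x) := fun x => rfl
  have hψprim : ψ.IsPrimitive := by
    intro t ht heq
    obtain ⟨x, hx⟩ := hTr t ht b₀
    have h2 := DFunLike.congr_fun heq x
    rw [AddChar.mulShift_apply, AddChar.one_apply] at h2
    rw [hψapp, hx] at h2
    exact hb₀ h2
  set B := Algebra.traceForm F E with hBdef
  set Wp := B.orthogonal W with hWpdef
  set Wpf : Finset E := Finset.univ.filter (· ∈ Wp) with hWpfdef
  have hWfdef : s = Finset.univ.filter (· ∈ W) := by
    ext x
    simp [hs x]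
  set Wf : Finset E := Finset.univ.filter (· ∈ W)
  rw [hWfdef]
  have hrefl : B.IsRefl := (Algebra.traceForm_isSymm (R := F) (S := E)).isRefl
  have hWmem : ∀ x : E, x ∈ W ↔ ∀ t ∈ Wp, Algebra.trace F E (t * x) = 0 := by
    intro x
    constructor
    · intro hx t htp
      rw [LinearMap.BilinForm.mem_orthogonal_iff] at htp
      have := htp x hx
      rw [hBdef, Algebra.traceForm_apply] at this
      rwa [mul_comm]
    · intro h
      have hxo : x ∈ B.orthogonal Wp := by
        rw [LinearMap.BilinForm.mem_orthogonal_iff]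
        intro t ht
        rw [hBdef, Algebra.traceForm_apply]
        exact h t ht
      rwa [hWpdef, LinearMap.BilinForm.orthogonal_orthogonal
        (traceForm_nondegenerate F E) hrefl] at hxo
  -- the inner-sum indicator
  have hkey : ∀ x : E, (∑ t ∈ Wpf, ψ (t * x)) = if x ∈ W then ((Wpf.card : ℂ)) else 0 := by
    intro x
    by_cases hx : x ∈ W
    · rw [if_pos hx]
      have h1 : ∀ t ∈ Wpf, ψ (t * x) = 1 := by
        intro t htp
        have htWp : t ∈ Wp := by simpa [hWpfdef] using htp
        rw [hψapp, (hWmem x).mp hx t htWp, AddChar.map_zero_eq_one]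
      rw [Finset.sum_congr rfl h1, Finset.sum_const, nsmul_eq_mul, mul_one]
    · rw [if_neg hx]
      have h1 : ¬ ∀ t ∈ Wp, Algebra.trace F E (t * x) = 0 := fun h => hx ((hWmem x).mpr h)
      push_neg at h1
      obtain ⟨t₁, ht₁Wp, ht₁⟩ := h1
      let f : Wp →+ E :=
        { toFun := fun t => (t : E) * x
          map_zero' := by simp
          map_add' := fun a b => by
            simp only [Submodule.coe_add]
            rw [add_mul] }
      let χx : AddChar Wp ℂ := ψ.compAddMonoidHom f
      have hχx : χx ≠ 1 := by
        rw [AddChar.ne_one_iff]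
        have hmem : (b₀ / Algebra.trace F E (t₁ * x)) • t₁ ∈ Wp :=
          Submodule.smul_mem _ _ ht₁Wp
        refine ⟨⟨(b₀ / Algebra.trace F E (t₁ * x)) • t₁, hmem⟩, ?_⟩
        have hval : χx ⟨(b₀ / Algebra.trace F E (t₁ * x)) • t₁, hmem⟩
            = ψF (Algebra.trace F E (((b₀ / Algebra.trace F E (t₁ * x)) • t₁) * x)) := rfl
        rw [hval, smul_mul_assoc, map_smul, smul_eq_mul, div_mul_cancel₀ _ ht₁]
        exact hb₀
      have h0 : ∑ t : Wp, χx t = 0 := AddChar.sum_eq_zero_of_ne_one hχx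
      have hsub : ∑ t ∈ Wpf, ψ (t * x) = ∑ t : Wp, χx t := by
        rw [Finset.sum_subtype (p := (· ∈ Wp)) Wpf (fun t => by simp [hWpfdef]) (fun t => ψ (t * x))]
        rfl
      rw [hsub, h0]
  -- the double sum identity
  have hswap : (Wpf.card : ℂ) * (∑ x ∈ Wf, lam x) = ∑ t ∈ Wpf, gaussSum lam (ψ.mulShift t) := by
    have h1 : ∀ t, gaussSum lam (ψ.mulShift t) = ∑ x : E, lam x * ψ (t * x) := by
      intro t
      rw [gaussSum]
      exact Finset.sum_congr rfl fun x _ => by rw [AddChar.mulShift_apply]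
    rw [Finset.sum_congr rfl (fun t _ => h1 t), Finset.sum_comm]
    have h2 : ∀ x : E, ∑ t ∈ Wpf, lam x * ψ (t * x)
        = if x ∈ W then lam x * (Wpf.card : ℂ) else 0 := by
      intro x
      rw [← Finset.mul_sum, hkey x]
      split_ifs <;> simp
    rw [Finset.sum_congr rfl (fun x _ => h2 x), ← Finset.sum_filter, Finset.mul_sum]
    exact Finset.sum_congr rfl fun x _ => mul_comm _ _
  -- bound each Gauss sum
  have hbound : ∀ t ∈ Wpf, ‖gaussSum lam (ψ.mulShift t)‖
      ≤ Real.sqrt (Fintype.card E) := by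
    intro t _
    rcases eq_or_ne t 0 with rfl | ht
    · rw [AddChar.mulShift_zero]
      have h1 : gaussSum lam (1 : AddChar E ℂ) = ∑ x : E, lam x := by
        rw [gaussSum]
        exact Finset.sum_congr rfl fun x _ => by rw [AddChar.one_apply, mul_one]
      rw [h1, MulChar.sum_eq_zero_of_ne_one hlam]
      simpa using Real.sqrt_nonneg (Fintype.card E : ℝ)
    · have hu : IsUnit t := isUnit_iff_ne_zero.mpr ht
      have hg := gaussSum_mulShift lam ψ hu.unit
      rw [IsUnit.unit_spec] at hg
      have habs1 : ‖lam t‖ = 1 := aux_abs_mulChar_unit lam ht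
      have heq : ‖gaussSum lam (ψ.mulShift t)‖ = ‖gaussSum lam ψ‖ := by
        rw [← hg, norm_mul, habs1, one_mul]
      rw [heq, aux_gauss_abs lam hlam ψ hψprim]
  -- conclude
  have hpos : 0 < Wpf.card := by
    refine Finset.card_pos.mpr ⟨0, ?_⟩
    simp [hWpfdef, Submodule.zero_mem]
  have hfinal : (Wpf.card : ℝ) * ‖∑ x ∈ Wf, lam x‖
      ≤ (Wpf.card : ℝ) * Real.sqrt (Fintype.card E) := by
    have h1 : ‖(Wpf.card : ℂ) * (∑ x ∈ Wf, lam x)‖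
        ≤ ∑ t ∈ Wpf, ‖gaussSum lam (ψ.mulShift t)‖ := by
      rw [hswap]
      have hns := norm_sum_le Wpf (fun t => gaussSum lam (ψ.mulShift t))
      simpa using hns
    have h2 : ∑ t ∈ Wpf, ‖gaussSum lam (ψ.mulShift t)‖
        ≤ (Wpf.card : ℝ) * Real.sqrt (Fintype.card E) := by
      calc ∑ t ∈ Wpf, ‖gaussSum lam (ψ.mulShift t)‖
          ≤ ∑ _t ∈ Wpf, Real.sqrt (Fintype.card E) := Finset.sum_le_sum hbound
        _ = (Wpf.card : ℝ) * Real.sqrt (Fintype.card E) := by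
            rw [Finset.sum_const, nsmul_eq_mul]
    calc (Wpf.card : ℝ) * ‖∑ x ∈ Wf, lam x‖
        = ‖(Wpf.card : ℂ) * (∑ x ∈ Wf, lam x)‖ := by
          rw [norm_mul, Complex.norm_natCast]
      _ ≤ (Wpf.card : ℝ) * Real.sqrt (Fintype.card E) := le_trans h1 h2
  exact le_of_mul_le_mul_left hfinal (by exact_mod_cast hpos)
theorem norm_surjective_on_large_subspace
    (F E : Type*) [Field F] [Fintype F] [Field E] [Fintype E] [Algebra F E]
    (W : Submodule F E)
    (hW : (Module.finrank F W : ℝ) ≥ (Module.finrank F E : ℝ) / 2 + 1) :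
    ∀ a : F, ∃ x ∈ W, Algebra.norm F x = a := by
  classical
  intro a
  rcases eq_or_ne a 0 with rfl | ha
  · exact ⟨0, W.zero_mem, Algebra.norm_zero⟩
  letI : Fintype (MulChar F ℂ) := Fintype.ofFinite _
  haveI : NeZero (Monoid.exponent Fˣ) := ⟨Monoid.exponent_ne_zero_of_finite⟩
  by_contra hcon
  push_neg at hcon
  set q := Fintype.card F with hqdef
  set n := Module.finrank F E with hndef
  set k := Module.finrank F W with hkdef
  have hq2 : 1 < q := Fintype.one_lt_card
  have hcardE : Fintype.card E = q ^ n := Module.card_eq_pow_finrank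
  have h2k : n + 2 ≤ 2 * k := by
    have : (n : ℝ) + 2 ≤ 2 * (k : ℝ) := by
      rw [ge_iff_le, div_add' _ _ _ (two_ne_zero), div_le_iff₀ (by norm_num : (0:ℝ) < 2)] at hW
      linarith
    exact_mod_cast this
  set Wf : Finset E := Finset.univ.filter (· ∈ W) with hWfdef
  have hWfmem : ∀ x : E, x ∈ Wf ↔ x ∈ W := by
    intro x; simp [hWfdef]
  have hcardW : Wf.card = q ^ k := by
    rw [hWfdef, ← Fintype.card_subtype]
    exact Module.card_eq_pow_finrank (K := F) (V := ↥W)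
  have h0W : (0 : E) ∈ Wf := (hWfmem 0).mpr W.zero_mem
  have hcnt : ∀ x ∈ Wf, Algebra.norm F x ≠ a := fun x hx => hcon x ((hWfmem x).mp hx)
  have hMcard : Fintype.card (MulChar F ℂ) = q - 1 := by
    have h2 := MulChar.card_eq_card_units_of_hasEnoughRootsOfUnity F ℂ
    simpa [Nat.card_eq_fintype_card, Fintype.card_units] using h2
  -- the full character sum vanishes
  have hzero : ∑ x ∈ Wf, ∑ χ : MulChar F ℂ, χ (Algebra.norm F x * a⁻¹) = 0 := by
    refine Finset.sum_eq_zero fun x hx => ?_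
    rw [aux_mulChar_orthogonality F (Algebra.norm F x * a⁻¹), if_neg]
    intro h
    exact hcnt x hx (by rwa [mul_inv_eq_one₀ ha] at h)
  -- swap the sums
  have hswap : ∑ x ∈ Wf, ∑ χ : MulChar F ℂ, χ (Algebra.norm F x * a⁻¹)
      = ∑ χ : MulChar F ℂ, (χ a⁻¹ * ∑ x ∈ Wf, χ (Algebra.norm F x)) := by
    rw [Finset.sum_comm]
    refine Finset.sum_congr rfl fun χ _ => ?_
    rw [Finset.mul_sum]
    exact Finset.sum_congr rfl fun x _ => by rw [map_mul, mul_comm]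
  -- the trivial character contribution
  have hS1 : ∑ x ∈ Wf, (1 : MulChar F ℂ) (Algebra.norm F x) = ((q ^ k - 1 : ℕ) : ℂ) := by
    have h1 : ∀ x ∈ Wf, (1 : MulChar F ℂ) (Algebra.norm F x)
        = if x ≠ 0 then (1 : ℂ) else 0 := by
      intro x _
      rcases eq_or_ne x 0 with rfl | hx0
      · rw [if_neg (by simp), Algebra.norm_zero]
        exact MulChar.map_nonunit _ not_isUnit_zero
      · rw [if_pos hx0,
          MulChar.one_apply (isUnit_iff_ne_zero.mpr (Algebra.norm_ne_zero_iff.mpr hx0))]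
    rw [Finset.sum_congr rfl h1, Finset.sum_boole, Finset.filter_ne', Finset.card_erase_of_mem h0W,
      hcardW]
  have htriv : (1 : MulChar F ℂ) a⁻¹ = 1 :=
    MulChar.one_apply (isUnit_iff_ne_zero.mpr (inv_ne_zero ha))
  -- split off the trivial character
  have hsplit : ∑ χ : MulChar F ℂ, (χ a⁻¹ * ∑ x ∈ Wf, χ (Algebra.norm F x))
      = ((q ^ k - 1 : ℕ) : ℂ)
        + ∑ χ ∈ Finset.univ.erase (1 : MulChar F ℂ),
            (χ a⁻¹ * ∑ x ∈ Wf, χ (Algebra.norm F x)) := by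
    rw [← Finset.add_sum_erase Finset.univ _ (Finset.mem_univ (1 : MulChar F ℂ)),
      htriv, one_mul, hS1]
  -- the identity
  have hid : ((q ^ k - 1 : ℕ) : ℂ)
      = - ∑ χ ∈ Finset.univ.erase (1 : MulChar F ℂ),
          (χ a⁻¹ * ∑ x ∈ Wf, χ (Algebra.norm F x)) := by
    have := hzero
    rw [hswap, hsplit] at this
    linear_combination this
  -- bound each nontrivial term
  have hterm : ∀ χ ∈ Finset.univ.erase (1 : MulChar F ℂ),
      ‖χ a⁻¹ * ∑ x ∈ Wf, χ (Algebra.norm F x)‖ ≤ Real.sqrt (Fintype.card E) := by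
    intro χ hχ
    have hχ1 : χ ≠ 1 := Finset.ne_of_mem_erase hχ
    have hlam := normMulChar_ne_one F E hχ1
    have hEq : ∑ x ∈ Wf, χ (Algebra.norm F x) = ∑ x ∈ Wf, normMulChar F E χ x :=
      Finset.sum_congr rfl fun x _ => rfl
    rw [norm_mul, aux_abs_mulChar_unit χ (inv_ne_zero ha), one_mul, hEq]
    exact aux_char_sum_bound F E W (normMulChar F E χ) hlam Wf hWfmem
  -- the final estimate
  have habs : ((q ^ k - 1 : ℕ) : ℝ) ≤ ((q - 2 : ℕ) : ℝ) * Real.sqrt (Fintype.card E) := by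
    have h1 : ‖((q ^ k - 1 : ℕ) : ℂ)‖ ≤ ((q - 2 : ℕ) : ℝ) * Real.sqrt (Fintype.card E) := by
      rw [hid, norm_neg]
      have h2 := norm_sum_le (Finset.univ.erase (1 : MulChar F ℂ))
        (fun χ => χ a⁻¹ * ∑ x ∈ Wf, χ (Algebra.norm F x))
      have h3 : ∑ χ ∈ Finset.univ.erase (1 : MulChar F ℂ),
          ‖χ a⁻¹ * ∑ x ∈ Wf, χ (Algebra.norm F x)‖
          ≤ ((q - 2 : ℕ) : ℝ) * Real.sqrt (Fintype.card E) := by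
        calc ∑ χ ∈ Finset.univ.erase (1 : MulChar F ℂ),
            ‖χ a⁻¹ * ∑ x ∈ Wf, χ (Algebra.norm F x)‖
            ≤ ∑ _χ ∈ Finset.univ.erase (1 : MulChar F ℂ), Real.sqrt (Fintype.card E) :=
              Finset.sum_le_sum hterm
          _ = ((q - 2 : ℕ) : ℝ) * Real.sqrt (Fintype.card E) := by
              rw [Finset.sum_const, nsmul_eq_mul, Finset.card_erase_of_mem (Finset.mem_univ _),
                Finset.card_univ, hMcard, show q - 1 - 1 = q - 2 by omega]
      calc ‖∑ χ ∈ Finset.univ.erase (1 : MulChar F ℂ),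
            (χ a⁻¹ * ∑ x ∈ Wf, χ (Algebra.norm F x))‖
          ≤ ∑ χ ∈ Finset.univ.erase (1 : MulChar F ℂ),
            ‖χ a⁻¹ * ∑ x ∈ Wf, χ (Algebra.norm F x)‖ := by
              simpa using h2
        _ ≤ ((q - 2 : ℕ) : ℝ) * Real.sqrt (Fintype.card E) := h3
    rwa [Complex.norm_natCast] at h1
  -- derive a contradiction
  set R := Real.sqrt (Fintype.card E) with hRdef
  have hR2 : R ^ 2 = (q : ℝ) ^ n := by
    rw [hRdef, Real.sq_sqrt (by positivity), hcardE]
    push_cast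
    ring
  have hR1 : 1 ≤ R := by
    have h1 : (1 : ℝ) ≤ (Fintype.card E : ℝ) := by exact_mod_cast Fintype.card_pos
    calc (1 : ℝ) = Real.sqrt 1 := Real.sqrt_one.symm
      _ ≤ R := Real.sqrt_le_sqrt h1
  have hRpos : 0 ≤ R := le_trans zero_le_one hR1
  have hq0 : (0 : ℝ) ≤ (q : ℝ) := by positivity
  have hqk : (q : ℝ) * R ≤ (q : ℝ) ^ k := by
    have h1 : ((q : ℝ) * R) ^ 2 = (q : ℝ) ^ (2 + n) := by
      rw [mul_pow, hR2, pow_add]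
    have h2 : (q : ℝ) ^ (2 + n) ≤ (q : ℝ) ^ (2 * k) := by
      gcongr
      · exact_mod_cast hq2.le
      · omega
    have h3 : ((q : ℝ) ^ k) ^ 2 = (q : ℝ) ^ (2 * k) := by
      rw [← pow_mul, mul_comm]
    calc (q : ℝ) * R = Real.sqrt (((q : ℝ) * R) ^ 2) := (Real.sqrt_sq (by positivity)).symm
      _ ≤ Real.sqrt (((q : ℝ) ^ k) ^ 2) := by
          apply Real.sqrt_le_sqrt
          rw [h1, h3]
          exact h2
      _ = (q : ℝ) ^ k := Real.sqrt_sq (by positivity)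
  have hcast1 : ((q ^ k - 1 : ℕ) : ℝ) = (q : ℝ) ^ k - 1 := by
    have : 1 ≤ q ^ k := Nat.one_le_pow _ _ (by omega)
    push_cast [Nat.cast_sub this]
    ring
  have hcast2 : ((q - 2 : ℕ) : ℝ) = (q : ℝ) - 2 := by
    push_cast [Nat.cast_sub hq2]
    ring
  rw [hcast1, hcast2] at habs
  have hexp : ((q : ℝ) - 2) * R = (q : ℝ) * R - 2 * R := by ring
  rw [hexp] at habs
  linarith
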